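/- arXiv:2605.13771 — 2 statements merged into one kernel-verified Lean document; each statement's English description precedes it below -/
import Mathlib

section
/- For integers 0 ≤ s ≤ t, max over 0 ≤ r ≤ s of the ratio H_{s,r}/H_{t,r} is at most 2^{2s+1}, where H_{m,r} = (1/(2r+1)) ∏_{j=0}^{r-1} (m+j+2)/(m-j). -/
lemma hahn_choose_le_two_pow (n k : ℕ) : n.choose k ≤ 2 ^ n := by
  calc n.choose k ≤ ∑ i ∈ Finset.range (n+1), n.choose i := by
        rcases le_or_gt k n with h | h
        · exact Finset.single_le_sum (f := fun i => n.choose i) (fun _ _ => Nat.zero_le _)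
            (Finset.mem_range.mpr (by omega))
        · simp [Nat.choose_eq_zero_of_lt h]
    _ = 2 ^ n := Nat.sum_range_choose n

lemma hahn_prod_eq (s : ℕ) : ∀ r ≤ s,
    ∏ j ∈ Finset.range r, ((s : ℝ) + j + 2) / ((s : ℝ) - j)
      = ((s + r + 1).factorial * (s - r).factorial : ℝ)
        / ((s + 1).factorial * s.factorial) := by
  intro r hr
  induction r with
  | zero =>
    have : (0:ℝ) < ((s+1).factorial * s.factorial : ℝ) := by positivity
    field_simp
    simp
  | succ r ih =>
    have hrs : r < s := hr
    rw [Finset.prod_range_succ, ih (le_of_lt hrs)]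
    have h1 : s + (r + 1) + 1 = (s + r + 1) + 1 := by ring
    have h2 : s - r = (s - (r + 1)) + 1 := by omega
    rw [h1, h2, Nat.factorial_succ (s + r + 1), Nat.factorial_succ ((s - (r+1)))]
    have hc : ((s : ℝ) - r) = ((s - (r+1) : ℕ) : ℝ) + 1 := by
      have : ((s - (r+1) : ℕ) : ℝ) = (s : ℝ) - (r + 1) := by
        push_cast [Nat.cast_sub (by omega : r + 1 ≤ s)]; ring
      rw [this]; ring
    rw [hc]
    have hpos : (0:ℝ) < ((s - (r+1) : ℕ) : ℝ) + 1 := by positivity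
    have hD : (0:ℝ) < ((s+1).factorial * s.factorial : ℝ) := by positivity
    rw [div_mul_div_comm, div_eq_div_iff (by positivity) (by positivity)]
    push_cast
    ring

lemma hahn_fact_bound (s r : ℕ) (hr : r ≤ s) :
    ((s + r + 1).factorial * (s - r).factorial : ℝ)
        / ((s + 1).factorial * s.factorial) ≤ 2 ^ (2 * s + 1) := by
  have key : (s + r + 1).factorial * (s - r).factorial
      ≤ 2 ^ (2 * s + 1) * ((s + 1).factorial * s.factorial) := by
    have h1 : (s + r + 1).choose r * r.factorial * (s + 1).factorial
        = (s + r + 1).factorial := by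
      have := Nat.choose_mul_factorial_mul_factorial
        (show r ≤ s + r + 1 by omega)
      simpa [show s + r + 1 - r = s + 1 by omega] using this
    have h2 : s.choose r * r.factorial * (s - r).factorial = s.factorial :=
      Nat.choose_mul_factorial_mul_factorial hr
    have hch : (s + r + 1).choose r ≤ 2 ^ (2 * s + 1) :=
      (hahn_choose_le_two_pow (s + r + 1) r).trans
        (Nat.pow_le_pow_right (by norm_num) (by omega))
    have hrf : r.factorial * (s - r).factorial ≤ s.factorial := by
      calc r.factorial * (s - r).factorial
          ≤ s.choose r * (r.factorial * (s - r).factorial) :=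
            Nat.le_mul_of_pos_left _ (Nat.choose_pos hr)
        _ = s.factorial := by rw [← h2]; ring
    calc (s + r + 1).factorial * (s - r).factorial
        = (s + r + 1).choose r * (r.factorial * (s - r).factorial) * (s + 1).factorial := by
          rw [← h1]; ring
      _ ≤ 2 ^ (2 * s + 1) * s.factorial * (s + 1).factorial :=
          Nat.mul_le_mul_right _ (Nat.mul_le_mul hch hrf)
      _ = 2 ^ (2 * s + 1) * ((s + 1).factorial * s.factorial) := by ring
  rw [div_le_iff₀ (by positivity)]
  calc ((s + r + 1).factorial * (s - r).factorial : ℝ)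
      ≤ ((2 ^ (2 * s + 1) * ((s + 1).factorial * s.factorial) : ℕ) : ℝ) := by
        exact_mod_cast Nat.cast_le.mpr key
    _ = 2 ^ (2 * s + 1) * ((s + 1).factorial * s.factorial) := by push_cast; ring

/-- `H_{m,r} = (1/(2r+1)) ∏_{j<r} (m+j+2)/(m-j)`. -/
noncomputable def hahnH (m r : ℕ) : ℝ :=
  (1 / (2 * (r : ℝ) + 1)) * ∏ j ∈ Finset.range r, ((m : ℝ) + j + 2) / ((m : ℝ) - j)

/-- For `0 ≤ s ≤ t`, the ratio `H_{s,r}/H_{t,r}` is at most `2^{2s+1}` for every `r ≤ s`. -/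
theorem hahn_norm_ratio_bound (s t : ℕ) (hst : s ≤ t) :
    ∀ r ≤ s, hahnH s r / hahnH t r ≤ 2 ^ (2 * s + 1) := by
  intro r hr
  have hc : (1 / (2 * (r : ℝ) + 1)) ≠ 0 := by positivity
  have hdiv : hahnH s r / hahnH t r
      = (∏ j ∈ Finset.range r, ((s : ℝ) + j + 2) / ((s : ℝ) - j))
        / (∏ j ∈ Finset.range r, ((t : ℝ) + j + 2) / ((t : ℝ) - j)) := by
    unfold hahnH
    rw [mul_div_mul_left _ _ hc]
  rw [hdiv]
  have hPt : 1 ≤ ∏ j ∈ Finset.range r, ((t : ℝ) + j + 2) / ((t : ℝ) - j) := by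
    have := Finset.prod_le_prod (s := Finset.range r) (f := fun _ : ℕ => (1:ℝ))
      (g := fun j : ℕ => ((t : ℝ) + j + 2) / ((t : ℝ) - j))
      (fun _ _ => zero_le_one) ?_
    · simpa using this
    intro j hj
    show (1:ℝ) ≤ ((t : ℝ) + j + 2) / ((t : ℝ) - j)
    have hjr : j < r := Finset.mem_range.mp hj
    have h0 : (0:ℝ) < (t : ℝ) - j := by
      have : (j : ℝ) + 1 ≤ (t : ℝ) := by exact_mod_cast (by omega : j + 1 ≤ t)
      linarith
    rw [le_div_iff₀ h0]
    have : (0:ℝ) ≤ (j : ℝ) := Nat.cast_nonneg j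
    linarith
  have hPs : 0 ≤ ∏ j ∈ Finset.range r, ((s : ℝ) + j + 2) / ((s : ℝ) - j) := by
    apply Finset.prod_nonneg
    intro j hj
    have hjr : j < r := Finset.mem_range.mp hj
    have h0 : (0:ℝ) < (s : ℝ) - j := by
      have : (j : ℝ) + 1 ≤ (s : ℝ) := by exact_mod_cast (by omega : j + 1 ≤ s)
      linarith
    positivity
  calc (∏ j ∈ Finset.range r, ((s : ℝ) + j + 2) / ((s : ℝ) - j))
        / (∏ j ∈ Finset.range r, ((t : ℝ) + j + 2) / ((t : ℝ) - j))
      ≤ ∏ j ∈ Finset.range r, ((s : ℝ) + j + 2) / ((s : ℝ) - j) :=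
        div_le_self hPs hPt
    _ = ((s + r + 1).factorial * (s - r).factorial : ℝ)
        / ((s + 1).factorial * s.factorial) := hahn_prod_eq s r hr
    _ ≤ 2 ^ (2 * s + 1) := hahn_fact_bound s r hr
end

section
/- Let 0 ≤ t ≤ n and define the hypergeometric sampling operator (T_{n,t} f)(k) = Σ_{a=0}^{t} f(a) · C(k,a)C(n−k, t−a)/C(n,t) for f : {0,…,t} → ℝ. Then for every 0 ≤ r ≤ t and every k ∈ {0,…,n}, (T_{n,t} Q_r^{(t)})(k) = Q_r^{(n)}(k), where Q_r^{(m)}(x) = Σ_{ℓ=0}^{r} (−1)^ℓ C(r,ℓ) C(r+ℓ,ℓ) x^{\underline{ℓ}}/m^{\underline{ℓ}} is the Hahn polynomial. -/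
open Finset

/-- The Hahn polynomial `Q_r^{(m)}(x) = Σ_{ℓ≤r} (-1)^ℓ C(r,ℓ)C(r+ℓ,ℓ) x^{underline ℓ}/m^{underline ℓ}`. -/
noncomputable def hahnQ (m r x : ℕ) : ℝ :=
  ∑ ℓ ∈ Finset.range (r + 1),
    (-1 : ℝ) ^ ℓ * (r.choose ℓ : ℝ) * ((r + ℓ).choose ℓ : ℝ) *
      (x.descFactorial ℓ : ℝ) / (m.descFactorial ℓ : ℝ)

/-- The hypergeometric sampling operator
`(T_{n,t} f)(k) = Σ_{a≤t} f(a) C(k,a)C(n-k,t-a)/C(n,t)`. -/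
noncomputable def hyperT (n t : ℕ) (f : ℕ → ℝ) (k : ℕ) : ℝ :=
  ∑ a ∈ Finset.range (t + 1),
    f a * ((k.choose a : ℝ) * ((n - k).choose (t - a) : ℝ) / (n.choose t : ℝ))

/-- Factorial moments of hypergeometric weights (binomial form). -/
lemma choose_moment (n t k ℓ : ℕ) (hℓt : ℓ ≤ t) (htn : t ≤ n) (hk : k ≤ n) :
    ∑ a ∈ range (t + 1), a.choose ℓ * (k.choose a * (n - k).choose (t - a))
      = k.choose ℓ * (n - ℓ).choose (t - ℓ) := by
  by_cases hℓk : ℓ ≤ k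
  · have split : range (t + 1) = range ℓ ∪ Finset.Ico ℓ (t + 1) := by
      rw [Finset.range_eq_Ico, Finset.range_eq_Ico, Finset.Ico_union_Ico_eq_Ico (Nat.zero_le _) (by omega)]
    rw [split, Finset.sum_union (by simp [Finset.disjoint_left]; omega)]
    have h1 : ∑ a ∈ range ℓ, a.choose ℓ * (k.choose a * (n - k).choose (t - a)) = 0 := by
      apply Finset.sum_eq_zero; intro a ha
      rw [Nat.choose_eq_zero_of_lt (Finset.mem_range.mp ha), Nat.zero_mul]
    rw [h1, Nat.zero_add]
    have h2 : ∀ a ∈ Finset.Ico ℓ (t + 1),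
        a.choose ℓ * (k.choose a * (n - k).choose (t - a))
          = k.choose ℓ * ((k - ℓ).choose (a - ℓ) * (n - k).choose ((t - ℓ) - (a - ℓ))) := by
      intro a ha
      rw [Finset.mem_Ico] at ha
      have ht : t - a = (t - ℓ) - (a - ℓ) := by omega
      rw [← ht, ← Nat.mul_assoc, ← Nat.mul_assoc]
      congr 1
      by_cases hak : a ≤ k
      · rw [mul_comm (a.choose ℓ), Nat.choose_mul ha.1]
      · rw [Nat.choose_eq_zero_of_lt (show k < a by omega), Nat.mul_zero,
          Nat.choose_eq_zero_of_lt (show k - ℓ < a - ℓ by omega), Nat.mul_zero]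
    rw [Finset.sum_congr rfl h2, ← Finset.mul_sum]
    congr 1
    have reindex : ∑ a ∈ Finset.Ico ℓ (t + 1),
        (k - ℓ).choose (a - ℓ) * (n - k).choose ((t - ℓ) - (a - ℓ))
        = ∑ b ∈ range (t - ℓ + 1), (k - ℓ).choose b * (n - k).choose ((t - ℓ) - b) := by
      rw [Finset.sum_Ico_eq_sum_range]
      exact Finset.sum_congr (by congr 1; omega)
        (fun b _ => by rw [show ℓ + b - ℓ = b by omega])
    rw [reindex]
    have vdm := Nat.add_choose_eq (k - ℓ) (n - k) (t - ℓ)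
    rw [Finset.Nat.sum_antidiagonal_eq_sum_range_succ_mk] at vdm
    have hnk : k - ℓ + (n - k) = n - ℓ := by omega
    rw [hnk] at vdm
    exact vdm.symm
  · rw [Nat.choose_eq_zero_of_lt (show k < ℓ by omega), Nat.zero_mul]
    apply Finset.sum_eq_zero; intro a _
    by_cases ha : a ≤ k
    · rw [Nat.choose_eq_zero_of_lt (show a < ℓ by omega), Nat.zero_mul]
    · rw [Nat.choose_eq_zero_of_lt (show k < a by omega), Nat.zero_mul, Nat.mul_zero]

lemma descFactorial_moment (n t k ℓ : ℕ) (hℓt : ℓ ≤ t) (htn : t ≤ n) (hk : k ≤ n) :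
    ∑ a ∈ range (t + 1), a.descFactorial ℓ * (k.choose a * (n - k).choose (t - a))
      = k.descFactorial ℓ * (n - ℓ).choose (t - ℓ) := by
  simp only [Nat.descFactorial_eq_factorial_mul_choose, Nat.mul_assoc]
  rw [← Finset.mul_sum, choose_moment n t k ℓ hℓt htn hk]

lemma choose_descFactorial (n t ℓ : ℕ) (hℓ : ℓ ≤ t) (htn : t ≤ n) :
    n.choose t * t.descFactorial ℓ = n.descFactorial ℓ * (n - ℓ).choose (t - ℓ) := by
  rw [Nat.descFactorial_eq_factorial_mul_choose, Nat.descFactorial_eq_factorial_mul_choose,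
    mul_comm (n.choose t), Nat.mul_assoc, Nat.mul_assoc, mul_comm (t.choose ℓ),
    Nat.choose_mul hℓ]

/-- Intertwining: `T_{n,t} Q_r^{(t)} = Q_r^{(n)}` on `{0,…,n}`. -/
theorem hyperT_hahn_intertwine (n t r : ℕ) (hrt : r ≤ t) (htn : t ≤ n) :
    ∀ k ≤ n, hyperT n t (fun a => hahnQ t r a) k = hahnQ n r k := by
  intro k hk
  unfold hyperT hahnQ
  simp only [Finset.sum_mul]
  rw [Finset.sum_comm]
  apply Finset.sum_congr rfl
  intro ℓ hℓ
  rw [Finset.mem_range] at hℓ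
  have hℓt : ℓ ≤ t := by omega
  have h1 : (t.descFactorial ℓ : ℝ) ≠ 0 :=
    Nat.cast_ne_zero.mpr (fun h => absurd (Nat.descFactorial_eq_zero_iff_lt.mp h) (by omega))
  have h2 : (n.choose t : ℝ) ≠ 0 := Nat.cast_ne_zero.mpr (Nat.choose_pos htn).ne'
  have h3 : (n.descFactorial ℓ : ℝ) ≠ 0 :=
    Nat.cast_ne_zero.mpr (fun h => absurd (Nat.descFactorial_eq_zero_iff_lt.mp h) (by omega))
  set c : ℝ := (-1 : ℝ) ^ ℓ * (r.choose ℓ : ℝ) * ((r + ℓ).choose ℓ : ℝ) with hc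
  have key : ∑ a ∈ range (t + 1),
      (a.descFactorial ℓ : ℝ) * ((k.choose a : ℝ) * ((n - k).choose (t - a) : ℝ))
      = (k.descFactorial ℓ : ℝ) * ((n - ℓ).choose (t - ℓ) : ℝ) := by
    exact_mod_cast congrArg (Nat.cast : ℕ → ℝ) (descFactorial_moment n t k ℓ hℓt htn hk)
  have key2 : (n.choose t : ℝ) * (t.descFactorial ℓ : ℝ)
      = (n.descFactorial ℓ : ℝ) * ((n - ℓ).choose (t - ℓ) : ℝ) := by
    exact_mod_cast congrArg (Nat.cast : ℕ → ℝ) (choose_descFactorial n t ℓ hℓt htn)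
  calc ∑ a ∈ range (t + 1),
        c * (a.descFactorial ℓ : ℝ) / (t.descFactorial ℓ : ℝ) *
          ((k.choose a : ℝ) * ((n - k).choose (t - a) : ℝ) / (n.choose t : ℝ))
      = c / ((t.descFactorial ℓ : ℝ) * (n.choose t : ℝ)) *
          ∑ a ∈ range (t + 1),
            (a.descFactorial ℓ : ℝ) * ((k.choose a : ℝ) * ((n - k).choose (t - a) : ℝ)) := by
        rw [Finset.mul_sum]; apply Finset.sum_congr rfl; intro a _; ring
    _ = c * (k.descFactorial ℓ : ℝ) / (n.descFactorial ℓ : ℝ) := by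
        rw [key]
        field_simp
        linear_combination (-(c * (k.descFactorial ℓ : ℝ))) * key2
end
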